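/- (Integration-by-parts identity (2.4).) Let Q : ℝ³ → M₃(ℝ) be twice continuously differentiable and φ ∈ C_c^∞(ℝ³). Then −∫_{ℝ³} ΔQ_{γδ} ∂_αQ_{γδ} ∂_αφ dx = ∫_{ℝ³} ½ |∇Q|² Δφ dx + ∫_{ℝ³} ( (∇Q⊗∇Q)_{αβ} − |∇Q|² δ_{αβ} ) ∂_α∂_βφ dx, where (∇Q⊗∇Q)_{αβ} := ∂_αQ_{γδ} ∂_βQ_{γδ}, |∇Q|² := ∂_αQ_{γδ} ∂_αQ_{γδ}, and repeated Greek indices are summed from 1 to 3. -/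

import Mathlib

noncomputable section
open Matrix MeasureTheory

/-- Euclidean 3-space. -/
abbrev E3 : Type := EuclideanSpace ℝ (Fin 3)
/-- Real 3×3 matrices. -/
abbrev M3 : Type := Matrix (Fin 3) (Fin 3) ℝ

/-- Partial derivative `∂_α f` of a scalar function on `ℝ³`. -/
def pd (α : Fin 3) (f : E3 → ℝ) (x : E3) : ℝ :=
  fderiv ℝ f x (EuclideanSpace.single α 1)

lemma pd_contDiff {n : ℕ} {f : E3 → ℝ} (hf : ContDiff ℝ ((n : ℕ) + 1) f) (α : Fin 3) :
    ContDiff ℝ (n : ℕ) (pd α f) := by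
  unfold pd
  exact (hf.fderiv_right (by exact_mod_cast le_rfl)).clm_apply contDiff_const

lemma pd_contDiff' {n : ℕ} {f : E3 → ℝ} (hf : ContDiff ℝ (n + 1 : ℕ) f) (α : Fin 3) :
    ContDiff ℝ (n : ℕ) (pd α f) := pd_contDiff (by exact_mod_cast hf) α

lemma pd_cont {f : E3 → ℝ} (hf : ContDiff ℝ 1 f) (α : Fin 3) : Continuous (pd α f) := by
  have : ContDiff ℝ ((0 : ℕ) : WithTop ℕ∞) (pd α f) := pd_contDiff (by exact_mod_cast hf) α
  exact this.continuous

lemma pd_hcs {f : E3 → ℝ} (hf : HasCompactSupport f) (α : Fin 3) :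
    HasCompactSupport (pd α f) :=
  hf.fderiv_apply ℝ (EuclideanSpace.single α 1)

lemma integ {F G : E3 → ℝ} (hF : Continuous F) (hG : Continuous G)
    (hGc : HasCompactSupport G) : Integrable (fun x => F x * G x) (volume : Measure E3) :=
  (hF.mul hG).integrable_of_hasCompactSupport (hGc.mul_left)

lemma ibp (α : Fin 3) {F G : E3 → ℝ} (hF : ContDiff ℝ 1 F) (hG : ContDiff ℝ 1 G)
    (hGc : HasCompactSupport G) :
    ∫ x : E3, pd α F x * G x = -∫ x : E3, F x * pd α G x := by
  have h1 : Integrable (fun x => pd α F x * G x) (volume : Measure E3) :=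
    integ (pd_cont hF α) hG.continuous hGc
  have h2 : Integrable (fun x => F x * pd α G x) (volume : Measure E3) :=
    integ hF.continuous (pd_cont hG α) (pd_hcs hGc α)
  have h3 : Integrable (fun x => F x * G x) (volume : Measure E3) :=
    integ hF.continuous hG.continuous hGc
  have := integral_mul_fderiv_eq_neg_fderiv_mul_of_integrable
    (f := F) (g := G) (v := EuclideanSpace.single α 1) h1 h2 h3
    (fun x _ => hF.differentiable one_ne_zero x) (fun x _ => hG.differentiable one_ne_zero x)
  unfold pd
  linarith [this]

lemma pd_mul {F G : E3 → ℝ} {x : E3} (hF : DifferentiableAt ℝ F x)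
    (hG : DifferentiableAt ℝ G x) (α : Fin 3) :
    pd α (fun y => F y * G y) x = pd α F x * G x + F x * pd α G x := by
  unfold pd
  rw [fderiv_fun_mul hF hG]
  simp [ContinuousLinearMap.add_apply, ContinuousLinearMap.smul_apply]
  ring

lemma pd_sq {G : E3 → ℝ} {x : E3} (hG : DifferentiableAt ℝ G x) (α : Fin 3) :
    pd α (fun y => (G y) ^ 2) x = 2 * G x * pd α G x := by
  have : (fun y => (G y) ^ 2) = fun y => G y * G y := by funext y; ring
  rw [this, pd_mul hG hG]
  ring

lemma pd_comm {f : E3 → ℝ} (hf : ContDiff ℝ 2 f) (α β : Fin 3) (x : E3) :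
    pd β (pd α f) x = pd α (pd β f) x := by
  have hdf : Differentiable ℝ f := hf.differentiable two_ne_zero
  have h1 : ContDiff ℝ 1 (fderiv ℝ f) := hf.fderiv_right (by norm_num)
  have h2 : DifferentiableAt ℝ (fderiv ℝ f) x := (h1.differentiable one_ne_zero) x
  have key := second_derivative_symmetric (fun y => (hdf y).hasFDerivAt) h2.hasFDerivAt
  have e : ∀ γ ν : Fin 3,
      pd ν (pd γ f) x = fderiv ℝ (fderiv ℝ f) x (EuclideanSpace.single ν 1)
        (EuclideanSpace.single γ 1) := by
    intro γ ν
    unfold pd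
    rw [fderiv_clm_apply h2 (differentiableAt_const _)]
    simp
  rw [e α β, e β α, key]

/-- Key per-index integration-by-parts identity. -/
lemma key_ibp {f φ : E3 → ℝ} (hf : ContDiff ℝ 2 f) (hφ : ContDiff ℝ 3 φ)
    (hφc : HasCompactSupport φ) (α β : Fin 3) :
    ∫ x : E3, pd β (pd β f) x * pd α f x * pd α φ x
      = (1 : ℝ) / 2 * (∫ x : E3, (pd β f x) ^ 2 * pd α (pd α φ) x)
        - ∫ x : E3, pd β f x * pd α f x * pd β (pd α φ) x := by
  have hf1 : ∀ γ : Fin 3, ContDiff ℝ 1 (pd γ f) := fun γ =>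
    (pd_contDiff' (n := 1) (by exact_mod_cast hf) γ : ContDiff ℝ ((1:ℕ) : WithTop ℕ∞) _)
  have hφ2 : ∀ γ : Fin 3, ContDiff ℝ 2 (pd γ φ) := fun γ =>
    (pd_contDiff' (n := 2) (by exact_mod_cast hφ) γ : ContDiff ℝ ((2:ℕ) : WithTop ℕ∞) _)
  have hφ1 : ∀ γ : Fin 3, ContDiff ℝ 1 (pd γ φ) := fun γ => (hφ2 γ).of_le (by norm_num)
  have hφ1c : ∀ γ : Fin 3, HasCompactSupport (pd γ φ) := fun γ => pd_hcs hφc γ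
  set G : E3 → ℝ := fun x => pd α f x * pd α φ x with hGdef
  have hG : ContDiff ℝ 1 G := (hf1 α).mul (hφ1 α)
  have hGc : HasCompactSupport G := (hφ1c α).mul_left
  have e1 : ∫ x : E3, pd β (pd β f) x * pd α f x * pd α φ x
      = -∫ x : E3, pd β f x * pd β G x := by
    rw [← ibp β (hf1 β) hG hGc]
    simp only [mul_assoc]
    rfl
  -- pointwise expansion of the right-hand side integrand
  set sq : E3 → ℝ := fun y => (pd β f y) ^ 2 with hsqdef
  have hsq : ContDiff ℝ 1 sq := (hf1 β).pow 2
  have hpt : ∀ x : E3, pd β f x * pd β G x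
      = (1 : ℝ) / 2 * (pd α sq x * pd α φ x)
        + pd β f x * pd α f x * pd β (pd α φ) x := by
    intro x
    have h1 : pd β G x = pd β (pd α f) x * pd α φ x + pd α f x * pd β (pd α φ) x :=
      pd_mul ((hf1 α).differentiable one_ne_zero x) ((hφ1 α).differentiable one_ne_zero x) β
    have h2 : pd α sq x = 2 * pd β f x * pd α (pd β f) x :=
      pd_sq ((hf1 β).differentiable one_ne_zero x) α
    rw [h1, h2, pd_comm hf α β x]
    ring
  have e2 : ∫ x : E3, pd β f x * pd β G x
      = (1 : ℝ) / 2 * (∫ x : E3, pd α sq x * pd α φ x)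
        + ∫ x : E3, pd β f x * pd α f x * pd β (pd α φ) x := by
    rw [show (fun x : E3 => pd β f x * pd β G x)
        = fun x : E3 => (1 : ℝ) / 2 * (pd α sq x * pd α φ x)
          + pd β f x * pd α f x * pd β (pd α φ) x from funext hpt]
    rw [integral_add, integral_const_mul]
    · exact (integ (pd_cont hsq α) ((hφ1 α).continuous) (hφ1c α)).const_mul _
    · exact integ (((hf1 β).continuous).mul ((hf1 α).continuous))
        (pd_cont (hφ1 α) β) (pd_hcs (hφ1c α) β)
  have e3 : ∫ x : E3, pd α sq x * pd α φ x
      = -∫ x : E3, sq x * pd α (pd α φ) x := ibp α hsq (hφ1 α) (hφ1c α)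
  rw [e1, e2, e3, hsqdef]
  ring

lemma comm2 {M : Type*} [AddCommMonoid M] (g : Fin 3 → Fin 3 → M) :
    ∑ a, ∑ b, g a b = ∑ b, ∑ a, g a b := Finset.sum_comm

lemma pull3 {M : Type*} [AddCommMonoid M] (g : Fin 3 → Fin 3 → Fin 3 → M) :
    ∑ a, ∑ b, ∑ c, g a b c = ∑ c, ∑ a, ∑ b, g a b c := by
  calc ∑ a, ∑ b, ∑ c, g a b c = ∑ a, ∑ c, ∑ b, g a b c :=
        Finset.sum_congr rfl fun a _ => Finset.sum_comm
    _ = ∑ c, ∑ a, ∑ b, g a b c := Finset.sum_comm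

lemma integral_sum4 {g : Fin 3 → Fin 3 → Fin 3 → Fin 3 → E3 → ℝ}
    (hg : ∀ a b c d, Integrable (g a b c d) (volume : Measure E3)) :
    ∫ x : E3, ∑ a, ∑ b, ∑ c, ∑ d, g a b c d x
      = ∑ a, ∑ b, ∑ c, ∑ d, ∫ x : E3, g a b c d x := by
  rw [integral_finset_sum _ fun a _ => integrable_finset_sum _ fun b _ =>
    integrable_finset_sum _ fun c _ => integrable_finset_sum _ fun d _ => hg a b c d]
  refine Finset.sum_congr rfl fun a _ => ?_
  rw [integral_finset_sum _ fun b _ => integrable_finset_sum _ fun c _ =>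
    integrable_finset_sum _ fun d _ => hg a b c d]
  refine Finset.sum_congr rfl fun b _ => ?_
  rw [integral_finset_sum _ fun c _ => integrable_finset_sum _ fun d _ => hg a b c d]
  refine Finset.sum_congr rfl fun c _ => ?_
  exact integral_finset_sum _ fun d _ => hg a b c d

lemma integrable_sum4 {g : Fin 3 → Fin 3 → Fin 3 → Fin 3 → E3 → ℝ}
    (hg : ∀ a b c d, Integrable (g a b c d) (volume : Measure E3)) :
    Integrable (fun x : E3 => ∑ a, ∑ b, ∑ c, ∑ d, g a b c d x) (volume : Measure E3) :=
  integrable_finset_sum _ fun a _ => integrable_finset_sum _ fun b _ =>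
    integrable_finset_sum _ fun c _ => integrable_finset_sum _ fun d _ => hg a b c d


/-- Integration-by-parts identity (2.4): for a `C²` matrix field `Q` and a
test function `φ`:
`−∫ ΔQ_{γδ} ∂_αQ_{γδ} ∂_αφ = ∫ ½|∇Q|² Δφ + ∫ ((∇Q⊗∇Q)_{αβ} − |∇Q|² δ_{αβ}) ∂_α∂_βφ`. -/
theorem statement_14 (Q : E3 → M3)
    (hQ : ∀ γ δ : Fin 3, ContDiff ℝ 2 (fun x => Q x γ δ))
    (φ : E3 → ℝ) (hφ : ContDiff ℝ (⊤ : ℕ∞) φ) (hφc : HasCompactSupport φ) :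
    -∫ x : E3, ∑ α, ∑ γ, ∑ δ,
        (∑ β, pd β (fun y => pd β (fun z => Q z γ δ) y) x)
          * pd α (fun z => Q z γ δ) x * pd α φ x
      = (∫ x : E3, (1 : ℝ) / 2 * (∑ α, ∑ γ, ∑ δ, (pd α (fun z => Q z γ δ) x) ^ 2)
            * (∑ β, pd β (fun y => pd β φ y) x))
        + ∫ x : E3, ∑ α, ∑ β,
            ((∑ γ, ∑ δ, pd α (fun z => Q z γ δ) x * pd β (fun z => Q z γ δ) x)
              - (∑ μ, ∑ γ, ∑ δ, (pd μ (fun z => Q z γ δ) x) ^ 2)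
                * (if α = β then (1 : ℝ) else 0))
            * pd α (fun y => pd β φ y) x := by
  -- basic regularity facts
  have hφ3 : ContDiff ℝ 3 φ := hφ.of_le (by decide)
  have hQ2 : ∀ γ δ, ContDiff ℝ ((1 : ℕ) + 1 : ℕ) (fun z => Q z γ δ) := fun γ δ => by
    exact_mod_cast hQ γ δ
  have hf1 : ∀ γ δ c, ContDiff ℝ 1 (pd c (fun z => Q z γ δ)) := fun γ δ c => by
    exact_mod_cast pd_contDiff' (hQ2 γ δ) c
  have hφ32 : ContDiff ℝ ((2 : ℕ) + 1 : ℕ) φ := by exact_mod_cast hφ3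
  have hφpd2 : ∀ a, ContDiff ℝ 2 (pd a φ) := fun a => by
    exact_mod_cast pd_contDiff' hφ32 a
  have hφpd1 : ∀ a, ContDiff ℝ 1 (pd a φ) := fun a => (hφpd2 a).of_le one_le_two
  have hcQ1 : ∀ γ δ c, Continuous (pd c (fun z => Q z γ δ)) :=
    fun γ δ c => (hf1 γ δ c).continuous
  have hcQ2 : ∀ γ δ c d, Continuous (pd d (pd c (fun z => Q z γ δ))) :=
    fun γ δ c d => pd_cont (hf1 γ δ c) d
  have hcφ1 : ∀ a, Continuous (pd a φ) := fun a => (hφpd1 a).continuous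
  have hcφ2 : ∀ a b, Continuous (pd a (pd b φ)) := fun a b => pd_cont (hφpd1 b) a
  have hsφ1 : ∀ a, HasCompactSupport (pd a φ) := fun a => pd_hcs hφc a
  have hsφ2 : ∀ a b, HasCompactSupport (pd a (pd b φ)) := fun a b => pd_hcs (pd_hcs hφc b) a
  -- integrability of all elementary integrands
  have IL : ∀ a γ δ b : Fin 3, Integrable (fun x : E3 =>
      pd b (fun y => pd b (fun z => Q z γ δ) y) x * pd a (fun z => Q z γ δ) x * pd a φ x)
      (volume : Measure E3) :=
    fun a γ δ b => integ ((hcQ2 γ δ b b).mul (hcQ1 γ δ a)) (hcφ1 a) (hsφ1 a)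
  have IR1 : ∀ a b γ δ : Fin 3, Integrable (fun x : E3 =>
      (1 : ℝ) / 2 * (pd b (fun z => Q z γ δ) x) ^ 2 * pd a (fun y => pd a φ y) x)
      (volume : Measure E3) :=
    fun a b γ δ => integ (continuous_const.mul ((hcQ1 γ δ b).pow 2)) (hcφ2 a a) (hsφ2 a a)
  have IF2 : ∀ a b γ δ : Fin 3, Integrable (fun x : E3 =>
      pd a (fun z => Q z γ δ) x * pd b (fun z => Q z γ δ) x * pd a (fun y => pd b φ y) x)
      (volume : Measure E3) :=
    fun a b γ δ => integ ((hcQ1 γ δ a).mul (hcQ1 γ δ b)) (hcφ2 a b) (hsφ2 a b)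
  have IG2 : ∀ a b γ δ : Fin 3, Integrable (fun x : E3 =>
      (pd b (fun z => Q z γ δ) x) ^ 2 * pd a (fun y => pd a φ y) x)
      (volume : Measure E3) :=
    fun a b γ δ => integ ((hcQ1 γ δ b).pow 2) (hcφ2 a a) (hsφ2 a a)
  -- Claim L
  have hL : -∫ x : E3, ∑ α, ∑ γ, ∑ δ,
        (∑ β, pd β (fun y => pd β (fun z => Q z γ δ) y) x)
          * pd α (fun z => Q z γ δ) x * pd α φ x
      = (∑ a, ∑ b, ∑ γ, ∑ δ, ∫ x : E3, pd a (fun z => Q z γ δ) x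
            * pd b (fun z => Q z γ δ) x * pd a (fun y => pd b φ y) x)
        - 1 / 2 * ∑ a, ∑ b, ∑ γ, ∑ δ, ∫ x : E3,
            (pd b (fun z => Q z γ δ) x) ^ 2 * pd a (fun y => pd a φ y) x := by
    have e0 : ∫ x : E3, ∑ α, ∑ γ, ∑ δ,
          (∑ β, pd β (fun y => pd β (fun z => Q z γ δ) y) x)
            * pd α (fun z => Q z γ δ) x * pd α φ x
        = ∑ a, ∑ γ, ∑ δ, ∑ b, ∫ x : E3,
            pd b (fun y => pd b (fun z => Q z γ δ) y) x
              * pd a (fun z => Q z γ δ) x * pd a φ x := by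
      have h := integral_sum4 (g := fun a γ δ b => fun x : E3 =>
        pd b (fun y => pd b (fun z => Q z γ δ) y) x
          * pd a (fun z => Q z γ δ) x * pd a φ x) (fun a γ δ b => IL a γ δ b)
      rw [← h]
      congr 1
      funext x
      simp only [Finset.sum_mul]
    have e1 : ∀ a γ δ b : Fin 3, (∫ x : E3,
          pd b (fun y => pd b (fun z => Q z γ δ) y) x
            * pd a (fun z => Q z γ δ) x * pd a φ x)
        = 1 / 2 * (∫ x : E3, (pd b (fun z => Q z γ δ) x) ^ 2 * pd a (fun y => pd a φ y) x)
          - ∫ x : E3, pd b (fun z => Q z γ δ) x * pd a (fun z => Q z γ δ) x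
              * pd b (fun y => pd a φ y) x :=
      fun a γ δ b => key_ibp (hQ γ δ) hφ3 hφc a b
    have e2 : (∑ a, ∑ γ, ∑ δ, ∑ b, ∫ x : E3,
          pd b (fun y => pd b (fun z => Q z γ δ) y) x
            * pd a (fun z => Q z γ δ) x * pd a φ x)
        = ∑ a, ∑ γ, ∑ δ, ∑ b,
            (1 / 2 * (∫ x : E3, (pd b (fun z => Q z γ δ) x) ^ 2
                * pd a (fun y => pd a φ y) x)
              - ∫ x : E3, pd b (fun z => Q z γ δ) x * pd a (fun z => Q z γ δ) x
                  * pd b (fun y => pd a φ y) x) :=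
      Finset.sum_congr rfl fun a _ => Finset.sum_congr rfl fun γ _ =>
        Finset.sum_congr rfl fun δ _ => Finset.sum_congr rfl fun b _ => e1 a γ δ b
    have p1 : (∑ a, ∑ γ, ∑ δ, ∑ b, ∫ x : E3,
          pd b (fun z => Q z γ δ) x * pd a (fun z => Q z γ δ) x
            * pd b (fun y => pd a φ y) x)
        = ∑ a, ∑ b, ∑ γ, ∑ δ, ∫ x : E3, pd a (fun z => Q z γ δ) x
            * pd b (fun z => Q z γ δ) x * pd a (fun y => pd b φ y) x := by
      calc (∑ a, ∑ γ, ∑ δ, ∑ b, ∫ x : E3,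
            pd b (fun z => Q z γ δ) x * pd a (fun z => Q z γ δ) x
              * pd b (fun y => pd a φ y) x)
          = ∑ a, ∑ b, ∑ γ, ∑ δ, ∫ x : E3,
              pd b (fun z => Q z γ δ) x * pd a (fun z => Q z γ δ) x
                * pd b (fun y => pd a φ y) x :=
            Finset.sum_congr rfl fun a _ => pull3 _
        _ = ∑ b, ∑ a, ∑ γ, ∑ δ, ∫ x : E3,
              pd b (fun z => Q z γ δ) x * pd a (fun z => Q z γ δ) x
                * pd b (fun y => pd a φ y) x := comm2 _
    have p2 : (∑ a, ∑ γ, ∑ δ, ∑ b, ∫ x : E3,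
          (pd b (fun z => Q z γ δ) x) ^ 2 * pd a (fun y => pd a φ y) x)
        = ∑ a, ∑ b, ∑ γ, ∑ δ, ∫ x : E3,
            (pd b (fun z => Q z γ δ) x) ^ 2 * pd a (fun y => pd a φ y) x :=
      Finset.sum_congr rfl fun a _ => pull3 _
    rw [e0, e2]
    simp only [Finset.sum_sub_distrib, ← Finset.mul_sum]
    rw [p1, p2]
    ring
  -- Claim R1
  have hR1 : (∫ x : E3, (1 : ℝ) / 2 * (∑ α, ∑ γ, ∑ δ, (pd α (fun z => Q z γ δ) x) ^ 2)
        * (∑ β, pd β (fun y => pd β φ y) x))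
      = 1 / 2 * ∑ a, ∑ b, ∑ γ, ∑ δ, ∫ x : E3,
          (pd b (fun z => Q z γ δ) x) ^ 2 * pd a (fun y => pd a φ y) x := by
    have h := integral_sum4 (g := fun a b γ δ => fun x : E3 =>
      (1 : ℝ) / 2 * (pd b (fun z => Q z γ δ) x) ^ 2 * pd a (fun y => pd a φ y) x)
      (fun a b γ δ => IR1 a b γ δ)
    have e0 : (∫ x : E3, (1 : ℝ) / 2 * (∑ α, ∑ γ, ∑ δ, (pd α (fun z => Q z γ δ) x) ^ 2)
          * (∑ β, pd β (fun y => pd β φ y) x))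
        = ∑ a, ∑ b, ∑ γ, ∑ δ, ∫ x : E3,
            (1 : ℝ) / 2 * (pd b (fun z => Q z γ δ) x) ^ 2 * pd a (fun y => pd a φ y) x := by
      rw [← h]
      congr 1
      funext x
      simp only [Finset.sum_mul, Finset.mul_sum]
    have e1 : ∀ a b γ δ : Fin 3, (∫ x : E3,
          (1 : ℝ) / 2 * (pd b (fun z => Q z γ δ) x) ^ 2 * pd a (fun y => pd a φ y) x)
        = 1 / 2 * ∫ x : E3,
            (pd b (fun z => Q z γ δ) x) ^ 2 * pd a (fun y => pd a φ y) x := by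
      intro a b γ δ
      rw [show (fun x : E3 => (1 : ℝ) / 2 * (pd b (fun z => Q z γ δ) x) ^ 2
            * pd a (fun y => pd a φ y) x)
          = fun x : E3 => (1 : ℝ) / 2 * ((pd b (fun z => Q z γ δ) x) ^ 2
            * pd a (fun y => pd a φ y) x) from funext fun x => mul_assoc _ _ _]
      exact integral_const_mul _ _
    rw [e0]
    rw [Finset.sum_congr rfl fun a _ => Finset.sum_congr rfl fun b _ =>
      Finset.sum_congr rfl fun γ _ => Finset.sum_congr rfl fun δ _ => e1 a b γ δ]
    simp only [← Finset.mul_sum]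
  -- Claim R2
  have hR2 : (∫ x : E3, ∑ α, ∑ β,
        ((∑ γ, ∑ δ, pd α (fun z => Q z γ δ) x * pd β (fun z => Q z γ δ) x)
          - (∑ μ, ∑ γ, ∑ δ, (pd μ (fun z => Q z γ δ) x) ^ 2)
            * (if α = β then (1 : ℝ) else 0))
        * pd α (fun y => pd β φ y) x)
      = (∑ a, ∑ b, ∑ γ, ∑ δ, ∫ x : E3, pd a (fun z => Q z γ δ) x
            * pd b (fun z => Q z γ δ) x * pd a (fun y => pd b φ y) x)
        - ∑ a, ∑ b, ∑ γ, ∑ δ, ∫ x : E3,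
            (pd b (fun z => Q z γ δ) x) ^ 2 * pd a (fun y => pd a φ y) x := by
    have e0 : (fun x : E3 => ∑ α, ∑ β,
          ((∑ γ, ∑ δ, pd α (fun z => Q z γ δ) x * pd β (fun z => Q z γ δ) x)
            - (∑ μ, ∑ γ, ∑ δ, (pd μ (fun z => Q z γ δ) x) ^ 2)
              * (if α = β then (1 : ℝ) else 0))
          * pd α (fun y => pd β φ y) x)
        = fun x : E3 =>
            (∑ a, ∑ b, ∑ γ, ∑ δ, pd a (fun z => Q z γ δ) x
              * pd b (fun z => Q z γ δ) x * pd a (fun y => pd b φ y) x)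
            - ∑ a, ∑ b, ∑ γ, ∑ δ,
                (pd b (fun z => Q z γ δ) x) ^ 2 * pd a (fun y => pd a φ y) x := by
      funext x
      simp only [sub_mul, Finset.sum_mul, Finset.mul_sum, mul_ite, ite_mul, mul_one, mul_zero,
        zero_mul, Finset.sum_ite_eq, Finset.mem_univ, if_true, Finset.sum_sub_distrib]
    rw [e0, integral_sub (integrable_sum4 fun a b γ δ => IF2 a b γ δ)
      (integrable_sum4 fun a b γ δ => IG2 a b γ δ),
      integral_sum4 (fun a b γ δ => IF2 a b γ δ),
      integral_sum4 (fun a b γ δ => IG2 a b γ δ)]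
  rw [hL, hR1, hR2]
  ring
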